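/- Let R be a nonempty bounded subset of ℝ^n with diameter D (in the Euclidean norm). Then the Chebyshev radius of R, i.e. inf_{x ∈ ℝ^n} sup_{r ∈ R} ‖x - r‖₂, is at most sqrt(n/(2(n+1))) · D. -/

import Mathlib

open Finset Metric Set

set_option maxHeartbeats 1000000 in
private lemma jung_finset {n : ℕ} (D : ℝ) (hD : 0 ≤ D)
    (S : Finset (EuclideanSpace ℝ (Fin n))) (hS : S.Nonempty)
    (hcard : S.card ≤ n + 1)
    (hdist : ∀ s ∈ S, ∀ t ∈ S, dist s t ≤ D) :
    ∃ x : EuclideanSpace ℝ (Fin n), ∀ s ∈ S,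
      dist x s ≤ Real.sqrt ((n : ℝ) / (2 * ((n : ℝ) + 1))) * D := by
  classical
  set f : EuclideanSpace ℝ (Fin n) → ℝ := fun x => S.sup' hS (fun s => dist x s) with hf_def
  have hf_cont : Continuous f := by
    rw [continuous_iff_continuousAt]
    intro x
    exact ContinuousAt.finset_sup'_apply hS
      (fun i _ => ((continuous_id.dist continuous_const).continuousAt))
  have hfge : ∀ x, ∀ s ∈ S, dist x s ≤ f x := fun x s hs => Finset.le_sup' _ hs
  obtain ⟨s₀, hs₀⟩ := hS
  have hs₀K : s₀ ∈ closedBall s₀ (f s₀) := by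
    simp only [mem_closedBall, dist_self]
    exact le_trans dist_nonneg (hfge s₀ s₀ hs₀)
  obtain ⟨x₀, hx₀K, hmin⟩ := (isCompact_closedBall s₀ (f s₀)).exists_isMinOn ⟨s₀, hs₀K⟩
    hf_cont.continuousOn
  have hglobal : ∀ y, f x₀ ≤ f y := by
    intro y
    by_cases hy : y ∈ closedBall s₀ (f s₀)
    · exact hmin hy
    · have h1 : f s₀ < dist y s₀ := by
        simp only [mem_closedBall, not_le] at hy; exact hy
      calc f x₀ ≤ f s₀ := hmin hs₀K
        _ ≤ dist y s₀ := h1.le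
        _ ≤ f y := hfge y s₀ hs₀
  set ρ : ℝ := f x₀ with hρ_def
  have hρ0 : 0 ≤ ρ := le_trans dist_nonneg (hfge x₀ s₀ hs₀)
  have hρ_le : ∀ s ∈ S, dist x₀ s ≤ ρ := hfge x₀
  set T : Finset (EuclideanSpace ℝ (Fin n)) := S.filter (fun s => dist x₀ s = ρ) with hT_def
  obtain ⟨t₀, ht₀S, ht₀⟩ := S.exists_mem_eq_sup' ⟨s₀, hs₀⟩ (fun s => dist x₀ s)
  have ht₀T : t₀ ∈ T := by
    rw [hT_def, Finset.mem_filter]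
    exact ⟨ht₀S, ht₀.symm⟩
  have hTS : ∀ s ∈ T, s ∈ S := fun s hs => (Finset.mem_filter.1 hs).1
  have hTρ : ∀ s ∈ T, dist x₀ s = ρ := fun s hs => (Finset.mem_filter.1 hs).2
  -- x₀ is in the convex hull of the farthest points T
  have hx₀hull : x₀ ∈ convexHull ℝ (↑T : Set (EuclideanSpace ℝ (Fin n))) := by
    by_contra hcon
    set C : Set (EuclideanSpace ℝ (Fin n)) := convexHull ℝ (↑T) with hC_def
    have hCcompact : IsCompact C := T.finite_toSet.isCompact_convexHull ℝ
    have hCconv : Convex ℝ C := convex_convexHull ℝ _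
    have hCne : C.Nonempty := ⟨t₀, subset_convexHull ℝ _ ht₀T⟩
    obtain ⟨y, hyC, hy⟩ := exists_norm_eq_iInf_of_complete_convex hCne
      hCcompact.isComplete hCconv x₀
    have hproj : ∀ z ∈ C, inner ℝ (x₀ - y) (z - y) ≤ (0:ℝ) :=
      (norm_eq_iInf_iff_real_inner_le_zero hCconv hyC).1 hy
    set v : EuclideanSpace ℝ (Fin n) := y - x₀ with hv_def
    have hvne : v ≠ 0 := by
      intro h
      exact hcon (sub_eq_zero.1 h ▸ hyC)
    have hvpos : 0 < ‖v‖ := norm_pos_iff.2 hvne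
    set δ : ℝ := ‖v‖^2 with hδ_def
    have hδpos : (0:ℝ) < δ := pow_pos hvpos 2
    have hkey : ∀ t ∈ T, δ ≤ inner ℝ v (t - x₀) := by
      intro t ht
      have h1 : inner ℝ (x₀ - y) (t - y) ≤ (0:ℝ) := hproj t (subset_convexHull ℝ _ ht)
      have h2 : x₀ - y = -v := by rw [hv_def]; abel
      have h3 : t - y = (t - x₀) - v := by rw [hv_def]; abel
      rw [h2, h3, inner_neg_left, inner_sub_right, real_inner_self_eq_norm_sq] at h1
      linarith
    set g : EuclideanSpace ℝ (Fin n) → ℝ :=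
      fun s => if dist x₀ s = ρ then 1 else (ρ - dist x₀ s) / (2 * ‖v‖) with hg_def
    have hgpos : ∀ s ∈ S, 0 < g s := by
      intro s hs
      simp only [hg_def]
      split_ifs with h
      · exact one_pos
      · exact div_pos (by cases lt_or_eq_of_le (hρ_le s hs) with
          | inl h' => linarith
          | inr h' => exact absurd h' h) (by linarith)
    set ε : ℝ := min 1 (S.inf' ⟨s₀, hs₀⟩ g) with hε_def
    have hεpos : 0 < ε := lt_min one_pos (by
      exact (Finset.lt_inf'_iff _).2 fun s hs => hgpos s hs)
    have hε1 : ε ≤ 1 := min_le_left _ _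
    have hεg : ∀ s ∈ S, ε ≤ g s := fun s hs =>
      le_trans (min_le_right _ _) (Finset.inf'_le _ hs)
    set x₁ : EuclideanSpace ℝ (Fin n) := x₀ + ε • v with hx₁_def
    have hlt : ∀ s ∈ S, dist x₁ s < ρ := by
      intro s hs
      by_cases hsT : dist x₀ s = ρ
      · have hsT' : s ∈ T := Finset.mem_filter.2 ⟨hs, hsT⟩
        have hnormsq : ‖x₁ - s‖^2 = ‖x₀ - s‖^2 + 2*(ε * inner ℝ v (x₀ - s)) + ε^2*‖v‖^2 := by
          have hxx : x₁ - s = (x₀ - s) + ε • v := by rw [hx₁_def]; abel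
          rw [hxx, norm_add_sq_real, real_inner_smul_right, real_inner_comm, norm_smul,
            Real.norm_eq_abs, abs_of_pos hεpos]
          ring
        have hinner : inner ℝ v (x₀ - s) ≤ -δ := by
          have hxs : (x₀ - s) = -(s - x₀) := by abel
          rw [hxs, inner_neg_right]
          linarith [hkey s hsT']
        have h3 : ‖x₀ - s‖ = ρ := by rw [← hsT, dist_eq_norm, norm_sub_rev]
        have h4 : ‖x₁ - s‖^2 < ρ^2 := by
          rw [hnormsq, h3, ← hδ_def]
          have t1 : ε * inner ℝ v (x₀ - s) ≤ ε * (-δ) :=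
            mul_le_mul_of_nonneg_left hinner hεpos.le
          have t2 : ε^2 * δ ≤ ε * δ := by
            nlinarith [mul_nonneg (mul_nonneg hεpos.le (sub_nonneg.2 hε1)) hδpos.le]
          nlinarith [mul_pos hεpos hδpos]
        have h5 : ‖x₁ - s‖ < ρ := by nlinarith [norm_nonneg (x₁ - s)]
        rwa [dist_eq_norm]
      · have hgs : g s = (ρ - dist x₀ s) / (2 * ‖v‖) := by simp only [hg_def, if_neg hsT]
        have hslt : dist x₀ s < ρ := lt_of_le_of_ne (hρ_le s hs) hsT
        calc dist x₁ s ≤ dist x₁ x₀ + dist x₀ s := dist_triangle _ _ _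
          _ = ε * ‖v‖ + dist x₀ s := by
              rw [hx₁_def, dist_eq_norm]
              simp [norm_smul, abs_of_pos hεpos]
          _ ≤ g s * ‖v‖ + dist x₀ s := by
              have := hεg s hs
              nlinarith
          _ = (ρ - dist x₀ s) / 2 + dist x₀ s := by
              rw [hgs]; field_simp
          _ < ρ := by linarith
    obtain ⟨t₁, ht₁S, ht₁⟩ := S.exists_mem_eq_sup' ⟨s₀, hs₀⟩ (fun s => dist x₁ s)
    have hlt' := hlt t₁ ht₁S
    have hfx₁ : f x₁ = dist x₁ t₁ := ht₁
    have := hglobal x₁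
    rw [hfx₁] at this
    linarith
  -- extract convex combination
  rw [Finset.convexHull_eq] at hx₀hull
  obtain ⟨w, hw0, hw1, hwc⟩ := hx₀hull
  have hwc' : ∑ s ∈ T, w s • s = x₀ := by
    rw [Finset.centerMass_eq_of_sum_1 _ _ hw1] at hwc
    simp only [id_eq] at hwc
    exact hwc
  have h0 : ∑ s ∈ T, w s • (s - x₀) = (0 : EuclideanSpace ℝ (Fin n)) := by
    have he : ∑ s ∈ T, w s • (s - x₀) = (∑ s ∈ T, w s • s) - (∑ s ∈ T, w s) • x₀ := by
      rw [Finset.sum_smul, ← Finset.sum_sub_distrib]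
      exact Finset.sum_congr rfl fun s _ => smul_sub _ _ _
    rw [he, hwc', hw1, one_smul, sub_self]
  have hnorm : ∀ s ∈ T, ‖s - x₀‖ = ρ := by
    intro s hs
    rw [← hTρ s hs, dist_eq_norm, norm_sub_rev]
  have h1' : ∑ s ∈ T, ∑ t ∈ T, w s * w t * ρ^2 = ρ^2 := by
    have e : ∀ s ∈ T, ∑ t ∈ T, w s * w t * ρ^2 = w s * ρ^2 := by
      intro s hs
      have e2 : (∑ t ∈ T, w s * w t * ρ^2) = (∑ t ∈ T, w t) * (w s * ρ^2) := by
        rw [Finset.sum_mul]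
        exact Finset.sum_congr rfl fun t _ => by ring
      rw [e2, hw1, one_mul]
    rw [Finset.sum_congr rfl e, ← Finset.sum_mul, hw1, one_mul]
  have hinner0 : ∑ s ∈ T, ∑ t ∈ T, w s * w t * inner ℝ (s - x₀) (t - x₀) = (0:ℝ) := by
    have e : ∑ s ∈ T, ∑ t ∈ T, w s * w t * inner ℝ (s - x₀) (t - x₀)
        = inner ℝ (∑ s ∈ T, w s • (s - x₀)) (∑ t ∈ T, w t • (t - x₀)) := by
      rw [sum_inner]
      refine Finset.sum_congr rfl fun s hs => ?_
      rw [inner_sum]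
      refine Finset.sum_congr rfl fun t ht => ?_
      rw [real_inner_smul_left, real_inner_smul_right]
      ring
    rw [e, h0, inner_zero_left]
  have hA : ∑ s ∈ T, ∑ t ∈ T, w s * w t * (dist s t)^2 = 2 * ρ^2 := by
    have e1 : ∑ s ∈ T, ∑ t ∈ T, w s * w t * (dist s t)^2 =
        ∑ s ∈ T, ∑ t ∈ T, (2 * (w s * w t * ρ^2) - 2 * (w s * w t * inner ℝ (s - x₀) (t - x₀))) := by
      refine Finset.sum_congr rfl fun s hs => Finset.sum_congr rfl fun t ht => ?_
      have hd : dist s t = ‖(s - x₀) - (t - x₀)‖ := by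
        rw [dist_eq_norm]; congr 1; abel
      rw [hd, norm_sub_sq_real, hnorm s hs, hnorm t ht]
      ring
    rw [e1]
    simp only [Finset.sum_sub_distrib, ← Finset.mul_sum]
    rw [h1', hinner0]
    ring
  have hB : ∑ s ∈ T, ∑ t ∈ T, w s * w t * (dist s t)^2 ≤ D^2 * (1 - ∑ s ∈ T, (w s)^2) := by
    have e2 : ∀ s ∈ T, ∑ t ∈ T, w s * w t * (dist s t)^2
        = ∑ t ∈ T.erase s, w s * w t * (dist s t)^2 := by
      intro s hs
      rw [← Finset.add_sum_erase _ _ hs]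
      simp [dist_self]
    calc ∑ s ∈ T, ∑ t ∈ T, w s * w t * (dist s t)^2
        = ∑ s ∈ T, ∑ t ∈ T.erase s, w s * w t * (dist s t)^2 := Finset.sum_congr rfl e2
      _ ≤ ∑ s ∈ T, ∑ t ∈ T.erase s, w s * w t * D^2 := by
          refine Finset.sum_le_sum fun s hs => Finset.sum_le_sum fun t ht => ?_
          have hd := hdist s (hTS s hs) t (hTS t (Finset.mem_of_mem_erase ht))
          have hws := hw0 s hs
          have hwt := hw0 t (Finset.mem_of_mem_erase ht)
          have hdn : (0:ℝ) ≤ dist s t := dist_nonneg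
          have hd2 : dist s t ^ 2 ≤ D^2 := by nlinarith
          exact mul_le_mul_of_nonneg_left hd2 (mul_nonneg hws hwt)
      _ = ∑ s ∈ T, w s * (1 - w s) * D^2 := by
          refine Finset.sum_congr rfl fun s hs => ?_
          have : ∑ t ∈ T.erase s, w s * w t * D^2 = w s * (∑ t ∈ T.erase s, w t) * D^2 := by
            rw [Finset.mul_sum, Finset.sum_mul]
          have h4 : ∑ t ∈ T.erase s, w t = 1 - w s := by
            rw [Finset.sum_erase_eq_sub hs, hw1]
          rw [this, h4]
      _ = D^2 * (1 - ∑ s ∈ T, (w s)^2) := by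
          have e3 : ∀ s ∈ T, w s * (1 - w s) * D^2 = D^2 * w s - D^2 * (w s)^2 :=
            fun s _ => by ring
          rw [Finset.sum_congr rfl e3, Finset.sum_sub_distrib, ← Finset.mul_sum,
            ← Finset.mul_sum, ← mul_sub, hw1]
  -- Cauchy-Schwarz bound on the weights
  have hTcard : (T.card : ℝ) ≤ (n : ℝ) + 1 := by
    exact_mod_cast le_trans (Finset.card_filter_le _ _) hcard
  have hsumsq_nonneg : (0:ℝ) ≤ ∑ s ∈ T, (w s)^2 :=
    Finset.sum_nonneg fun s _ => sq_nonneg _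
  have hcs : (1:ℝ) ≤ (T.card : ℝ) * ∑ s ∈ T, (w s)^2 := by
    have := sq_sum_le_card_mul_sum_sq (s := T) (f := w)
    rw [hw1] at this
    simpa using this
  have hn1 : (0:ℝ) < (n:ℝ) + 1 := by positivity
  have hwsq : (1:ℝ)/((n:ℝ)+1) ≤ ∑ s ∈ T, (w s)^2 := by
    rw [div_le_iff₀ hn1]
    calc (1:ℝ) ≤ (T.card : ℝ) * ∑ s ∈ T, (w s)^2 := hcs
      _ ≤ ((n:ℝ)+1) * ∑ s ∈ T, (w s)^2 := by nlinarith
      _ = (∑ s ∈ T, (w s)^2) * ((n:ℝ)+1) := by ring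
  have hρsq : ρ^2 ≤ (n:ℝ)/(2*((n:ℝ)+1)) * D^2 := by
    have hfrac : (n:ℝ)/((n:ℝ)+1) = 1 - 1/((n:ℝ)+1) := by field_simp; ring
    have h2 : 2 * ρ^2 ≤ D^2 * ((n:ℝ)/((n:ℝ)+1)) := by
      rw [hA] at hB
      have : (1:ℝ) - ∑ s ∈ T, (w s)^2 ≤ (n:ℝ)/((n:ℝ)+1) := by
        rw [hfrac]; linarith
      nlinarith [sq_nonneg D]
    have hn1' : ((n:ℝ)+1) ≠ 0 := ne_of_gt hn1
    have he : (n:ℝ)/(2*((n:ℝ)+1)) * D^2 = (D^2 * ((n:ℝ)/((n:ℝ)+1)))/2 := by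
      field_simp
    rw [he]
    linarith
  have hρle : ρ ≤ Real.sqrt ((n : ℝ) / (2 * ((n : ℝ) + 1))) * D := by
    have h1 := Real.sqrt_le_sqrt hρsq
    rw [Real.sqrt_sq hρ0, Real.sqrt_mul (by positivity) (D^2), Real.sqrt_sq hD] at h1
    exact h1
  exact ⟨x₀, fun s hs => le_trans (hρ_le s hs) hρle⟩

/-- Jung's theorem: for a nonempty bounded `R ⊆ ℝ^n` with Euclidean diameter `D`, the
Chebyshev radius `inf_x sup_{r ∈ R} ‖x - r‖₂` is at most `√(n / (2(n+1))) · D`. -/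
theorem stmt_3 {n : ℕ} (R : Set (EuclideanSpace ℝ (Fin n)))
    (hR : R.Nonempty) (hbdd : Bornology.IsBounded R) :
    sInf {t : ℝ | ∃ x : EuclideanSpace ℝ (Fin n), ∀ r ∈ R, dist x r ≤ t} ≤
      Real.sqrt ((n : ℝ) / (2 * ((n : ℝ) + 1))) * Metric.diam R := by
  classical
  set r₀ := Real.sqrt ((n:ℝ)/(2*((n:ℝ)+1))) * Metric.diam R with hr₀
  have hD : 0 ≤ Metric.diam R := Metric.diam_nonneg
  have hfin : Module.finrank ℝ (EuclideanSpace ℝ (Fin n)) = n := finrank_euclideanSpace_fin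
  have hinter : (⋂ i : R, closedBall (i : EuclideanSpace ℝ (Fin n)) r₀).Nonempty := by
    apply Convex.helly_theorem_compact' (𝕜 := ℝ)
    · exact fun i => convex_closedBall _ _
    · exact fun i => isCompact_closedBall _ _
    · intro I hI
      rcases I.eq_empty_or_nonempty with rfl | hIne
      · simp
      · set S := I.image (fun i : R => (i : EuclideanSpace ℝ (Fin n))) with hSdef
        have hSne : S.Nonempty := hIne.image _
        have hScard : S.card ≤ n + 1 := le_trans Finset.card_image_le (by rwa [hfin] at hI)
        have hSdist : ∀ s ∈ S, ∀ t ∈ S, dist s t ≤ Metric.diam R := by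
          intro s hs t ht
          rw [hSdef, Finset.mem_image] at hs ht
          obtain ⟨i, -, rfl⟩ := hs
          obtain ⟨j, -, rfl⟩ := ht
          exact Metric.dist_le_diam_of_mem hbdd i.2 j.2
        obtain ⟨x, hx⟩ := jung_finset (Metric.diam R) hD S hSne hScard hSdist
        refine ⟨x, ?_⟩
        rw [Set.mem_iInter₂]
        intro i hi
        exact hx _ (Finset.mem_image_of_mem _ hi)
  obtain ⟨x, hx⟩ := hinter
  apply csInf_le
  · refine ⟨0, fun t ht => ?_⟩
    obtain ⟨y, hy⟩ := ht
    obtain ⟨r, hr⟩ := hR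
    exact le_trans dist_nonneg (hy r hr)
  · refine ⟨x, fun r hr => ?_⟩
    have := Set.mem_iInter.1 hx ⟨r, hr⟩
    simpa using this
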